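/- Let l = (a,b) ∈ ℤ² be nonzero and l^⊥ = (−b,a). Let z ∈ ℤ². (i) If ⟨z,l⟩ ≥ 0 and ⟨z,l^⊥⟩ ≥ 1, define Γ(n) = z + ⌊(n+1)/2⌋·l + ⌊n/2⌋·l^⊥ for n ∈ ℕ and Δ(n) = Γ(n+1) − Γ(n) (so Δ(n) = l when n is even and Δ(n) = l^⊥ when n is odd). Then for all n ∈ ℕ: |Γ(n)|²·|l|² − ⟨Γ(n), Δ(n)⟩² ≥ (n+1)²/4. (ii) The same conclusion holds if instead ⟨z,l⟩ ≥ 1 and ⟨z,l^⊥⟩ ≥ 0 and Γ(n) = z + ⌊n/2⌋·l + ⌊(n+1)/2⌋·l^⊥. -/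
import Mathlib


noncomputable section

/-- Euclidean inner product on `ℤ²` (integer valued). -/
def ipz (k l : ℤ × ℤ) : ℤ := k.1 * l.1 + k.2 * l.2

/-- Squared Euclidean norm on `ℤ²` (integer valued). -/
def nsqz (k : ℤ × ℤ) : ℤ := k.1 ^ 2 + k.2 ^ 2

/-- Rotation by 90 degrees: for `l = (a,b)`, `perp l = (-b,a)`. -/
def perp (l : ℤ × ℤ) : ℤ × ℤ := (-l.2, l.1)

/-- First class of orbits: `Γ(n) = z + ⌊(n+1)/2⌋ l + ⌊n/2⌋ l^⊥`. -/
def orbit1 (z l : ℤ × ℤ) (n : ℕ) : ℤ × ℤ :=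
  z + (((n + 1) / 2 : ℕ) : ℤ) • l + ((n / 2 : ℕ) : ℤ) • perp l

/-- Second class of orbits: `Γ(n) = z + ⌊n/2⌋ l + ⌊(n+1)/2⌋ l^⊥`. -/
def orbit2 (z l : ℤ × ℤ) (n : ℕ) : ℤ × ℤ :=
  z + ((n / 2 : ℕ) : ℤ) • l + (((n + 1) / 2 : ℕ) : ℤ) • perp l

lemma key1e (z l : ℤ × ℤ) (m : ℕ) :
    nsqz (orbit1 z l (2*m)) * nsqz l -
      ipz (orbit1 z l (2*m)) (orbit1 z l (2*m+1) - orbit1 z l (2*m)) ^ 2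
    = (ipz z (perp l) + m * nsqz l) ^ 2 := by
  have h1 : (2*m+1)/2 = m := by omega
  have h2 : (2*m)/2 = m := by omega
  have h3 : (2*m+1+1)/2 = m+1 := by omega
  simp only [orbit1, h1, h2, h3, ipz, nsqz, perp, Prod.fst_add, Prod.snd_add,
    Prod.fst_sub, Prod.snd_sub, Prod.smul_fst, Prod.smul_snd, smul_eq_mul]
  push_cast
  ring

lemma key1o (z l : ℤ × ℤ) (m : ℕ) :
    nsqz (orbit1 z l (2*m+1)) * nsqz l -
      ipz (orbit1 z l (2*m+1)) (orbit1 z l (2*m+1+1) - orbit1 z l (2*m+1)) ^ 2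
    = (ipz z l + (m+1) * nsqz l) ^ 2 := by
  have h1 : (2*m+1)/2 = m := by omega
  have h3 : (2*m+1+1)/2 = m+1 := by omega
  have h4 : (2*m+1+1+1)/2 = m+1 := by omega
  simp only [orbit1, h1, h3, h4, ipz, nsqz, perp, Prod.fst_add, Prod.snd_add,
    Prod.fst_sub, Prod.snd_sub, Prod.smul_fst, Prod.smul_snd, smul_eq_mul]
  push_cast
  ring

lemma key2e (z l : ℤ × ℤ) (m : ℕ) :
    nsqz (orbit2 z l (2*m)) * nsqz l -
      ipz (orbit2 z l (2*m)) (orbit2 z l (2*m+1) - orbit2 z l (2*m)) ^ 2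
    = (ipz z l + m * nsqz l) ^ 2 := by
  have h1 : (2*m+1)/2 = m := by omega
  have h2 : (2*m)/2 = m := by omega
  have h3 : (2*m+1+1)/2 = m+1 := by omega
  simp only [orbit2, h1, h2, h3, ipz, nsqz, perp, Prod.fst_add, Prod.snd_add,
    Prod.fst_sub, Prod.snd_sub, Prod.smul_fst, Prod.smul_snd, smul_eq_mul]
  push_cast
  ring

lemma key2o (z l : ℤ × ℤ) (m : ℕ) :
    nsqz (orbit2 z l (2*m+1)) * nsqz l -
      ipz (orbit2 z l (2*m+1)) (orbit2 z l (2*m+1+1) - orbit2 z l (2*m+1)) ^ 2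
    = (ipz z (perp l) + (m+1) * nsqz l) ^ 2 := by
  have h1 : (2*m+1)/2 = m := by omega
  have h3 : (2*m+1+1)/2 = m+1 := by omega
  have h4 : (2*m+1+1+1)/2 = m+1 := by omega
  simp only [orbit2, h1, h3, h4, ipz, nsqz, perp, Prod.fst_add, Prod.snd_add,
    Prod.fst_sub, Prod.snd_sub, Prod.smul_fst, Prod.smul_snd, smul_eq_mul]
  push_cast
  ring

lemma nsqz_pos (l : ℤ × ℤ) (hl : l ≠ 0) : 1 ≤ nsqz l := by
  have h : l.1 ≠ 0 ∨ l.2 ≠ 0 := by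
    by_contra hc
    push_neg at hc
    exact hl (Prod.ext hc.1 hc.2)
  unfold nsqz
  rcases h with h | h
  · nlinarith [Int.one_le_abs h, sq_abs l.1, sq_nonneg l.2, abs_nonneg l.1]
  · nlinarith [Int.one_le_abs h, sq_abs l.2, sq_nonneg l.1, abs_nonneg l.2]

lemma cast_step (n : ℕ) (E : ℤ) (h : ((n : ℤ) + 1) ^ 2 ≤ 4 * E) :
    ((n : ℝ) + 1) ^ 2 / 4 ≤ (E : ℝ) := by
  have : (((n : ℤ) + 1) ^ 2 : ℝ) ≤ ((4 * E : ℤ) : ℝ) := by exact_mod_cast h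
  push_cast at this
  linarith

/-- Orbit estimates in `ℤ²`: for nonzero `l` and the orbits alternating between the steps
`l` and `l^⊥`, one has `|Γ(n)|²|l|² - ⟨Γ(n), Δ(n)⟩² ≥ (n+1)²/4`, where
`Δ(n) = Γ(n+1) - Γ(n)`, (i) when `⟨z,l⟩ ≥ 0` and `⟨z,l^⊥⟩ ≥ 1`, and
(ii) when `⟨z,l⟩ ≥ 1` and `⟨z,l^⊥⟩ ≥ 0` for the second class of orbits. -/
theorem stmt8 (z l : ℤ × ℤ) (hl : l ≠ 0) :
    (0 ≤ ipz z l → 1 ≤ ipz z (perp l) →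
      ∀ n : ℕ,
        ((n : ℝ) + 1) ^ 2 / 4 ≤
          ((nsqz (orbit1 z l n) * nsqz l -
            ipz (orbit1 z l n) (orbit1 z l (n + 1) - orbit1 z l n) ^ 2 : ℤ) : ℝ)) ∧
    (1 ≤ ipz z l → 0 ≤ ipz z (perp l) →
      ∀ n : ℕ,
        ((n : ℝ) + 1) ^ 2 / 4 ≤
          ((nsqz (orbit2 z l n) * nsqz l -
            ipz (orbit2 z l n) (orbit2 z l (n + 1) - orbit2 z l n) ^ 2 : ℤ) : ℝ)) := by
  have hL := nsqz_pos l hl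
  constructor
  · intro hp hq n
    rcases Nat.even_or_odd n with ⟨m, hm⟩ | ⟨m, hm⟩
    · have hn : n = 2*m := by omega
      subst hn
      rw [key1e]
      apply cast_step
      push_cast
      have h1 : (m:ℤ)+1 ≤ ipz z (perp l) + m * nsqz l := by nlinarith
      have h2 : ((m:ℤ)+1)^2 ≤ (ipz z (perp l) + m * nsqz l)^2 :=
        pow_le_pow_left₀ (by positivity) h1 2
      nlinarith [h2]
    · subst hm
      rw [key1o]
      apply cast_step
      push_cast
      have h1 : (m:ℤ)+1 ≤ ipz z l + (m+1) * nsqz l := by nlinarith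
      have h2 : ((m:ℤ)+1)^2 ≤ (ipz z l + (m+1) * nsqz l)^2 :=
        pow_le_pow_left₀ (by positivity) h1 2
      nlinarith [h2]
  · intro hp hq n
    rcases Nat.even_or_odd n with ⟨m, hm⟩ | ⟨m, hm⟩
    · have hn : n = 2*m := by omega
      subst hn
      rw [key2e]
      apply cast_step
      push_cast
      have h1 : (m:ℤ)+1 ≤ ipz z l + m * nsqz l := by nlinarith
      have h2 : ((m:ℤ)+1)^2 ≤ (ipz z l + m * nsqz l)^2 :=
        pow_le_pow_left₀ (by positivity) h1 2
      nlinarith [h2]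
    · subst hm
      rw [key2o]
      apply cast_step
      push_cast
      have h1 : (m:ℤ)+1 ≤ ipz z (perp l) + (m+1) * nsqz l := by nlinarith
      have h2 : ((m:ℤ)+1)^2 ≤ (ipz z (perp l) + (m+1) * nsqz l)^2 :=
        pow_le_pow_left₀ (by positivity) h1 2
      nlinarith [h2]
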